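/- Let F be a d-regular graph on n vertices (d ≥ 3) such that every subgraph F̃ ⊂ F with 3 ≤ |V(F̃)| ≤ n−3 has edge boundary of size at least d+1. Define Δ = d+1 if d is odd and Δ = d+2 if d is even. Then every induced subgraph F̃ of F with at least 3 vertices whose edge boundary has size exactly Δ has minimum degree at least d/2. -/

import Mathlib

open SimpleGraph
open Classical

/-- The edge boundary of a subgraph `H` of `G`: edges of `G` with one endpoint in `H.verts`
and the other outside. -/
def edgeBoundary {V : Type*} (G : SimpleGraph V) (H : G.Subgraph) : Set (Sym2 V) :=
  {e | ∃ u v, e = s(u, v) ∧ G.Adj u v ∧ u ∈ H.verts ∧ v ∉ H.verts}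

/-- `G` is `d`-regular. -/
def IsRegularGraph {V : Type*} (G : SimpleGraph V) (d : ℕ) : Prop :=
  ∀ v, (G.neighborSet v).ncard = d

/-- `G` on `n` vertices is locally sparse: every subgraph on between 3 and `n - 3`
vertices has edge boundary of size at least `d + 1`. -/
def LocallySparse {n : ℕ} (G : SimpleGraph (Fin n)) (d : ℕ) : Prop :=
  ∀ H : G.Subgraph, 3 ≤ H.verts.ncard → H.verts.ncard ≤ n - 3 →
    d + 1 ≤ (edgeBoundary G H).ncard

/-- `Δ = d + 1` for odd `d`, `Δ = d + 2` for even `d`. -/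
def Delta (d : ℕ) : ℕ := if Odd d then d + 1 else d + 2

/-- A closed subgraph: an induced subgraph whose edge boundary has size exactly `Δ`. -/
def IsClosedSubgraph {V : Type*} (G : SimpleGraph V) (d : ℕ) (H : G.Subgraph) : Prop :=
  H.IsInduced ∧ (edgeBoundary G H).ncard = Delta d

/-- Every closed subgraph of a locally sparse `d`-regular graph with at least 3 vertices
has minimum degree at least `d / 2`. -/
lemma nbr_inter {n : ℕ} {G : SimpleGraph (Fin n)} {H : G.Subgraph} (hind : H.IsInduced)
    {u : Fin n} (hu : u ∈ H.verts) : G.neighborSet u ∩ H.verts = H.neighborSet u := by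
  ext w
  constructor
  · rintro ⟨ha, hw⟩; exact hind hu hw ha
  · intro h; exact ⟨H.adj_sub h, h.snd_mem⟩
lemma edgeBoundary_ncard_eq_sum {n d : ℕ} {G : SimpleGraph (Fin n)}
    (hreg : IsRegularGraph G d) {H : G.Subgraph} (hind : H.IsInduced) :
    (edgeBoundary G H).ncard
      = ∑ u ∈ H.verts.toFinset, (d - (H.neighborSet u).ncard) := by
  classical
  have hB : (edgeBoundary G H).toFinset
      = H.verts.toFinset.biUnion
          (fun u => (G.neighborSet u \ H.verts).toFinset.image (fun w => s(u, w))) := by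
    ext e
    simp only [Set.mem_toFinset]
    simp only [Set.mem_toFinset, Finset.mem_biUnion, Finset.mem_image, edgeBoundary,
      Set.mem_setOf_eq, Set.mem_diff, mem_neighborSet]
    constructor
    · rintro ⟨u, v, rfl, hadj, hu, hv⟩
      exact ⟨u, hu, v, ⟨hadj, hv⟩, rfl⟩
    · rintro ⟨u, hu, w, ⟨hadj, hw⟩, rfl⟩
      exact ⟨u, w, rfl, hadj, hu, hw⟩
  rw [Set.ncard_eq_toFinset_card', hB, Finset.card_biUnion]
  · refine Finset.sum_congr rfl ?_
    intro u hu
    rw [Set.mem_toFinset] at hu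
    rw [Finset.card_image_of_injOn, ← Set.ncard_eq_toFinset_card']
    · have hsub : G.neighborSet u ∩ H.verts ⊆ G.neighborSet u := Set.inter_subset_left
      have : G.neighborSet u \ H.verts = G.neighborSet u \ (G.neighborSet u ∩ H.verts) := by
        ext w; simp [Set.mem_diff]
      rw [this, Set.ncard_diff hsub (Set.toFinite _), nbr_inter hind hu, hreg u]
    · intro w hw w' hw' heq
      simp only [Finset.mem_coe, Set.mem_toFinset, Set.mem_diff] at hw hw'
      rcases Sym2.eq_iff.mp heq with ⟨_, h⟩ | ⟨h1, _⟩
      · exact h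
      · exact absurd hu (h1 ▸ hw'.2)
  · intro u hu u' hu' hne
    rw [Finset.mem_coe, Set.mem_toFinset] at hu hu'
    simp only [Finset.disjoint_left, Finset.mem_image, Set.mem_toFinset, Set.mem_diff,
      mem_neighborSet]
    rintro e ⟨w, ⟨hadj, hw⟩, rfl⟩ ⟨w', ⟨hadj', hw'⟩, heq⟩
    rcases Sym2.eq_iff.mp heq.symm with ⟨h1, _⟩ | ⟨h1, h2⟩
    · exact hne h1
    · exact hw' (h1 ▸ hu)
lemma Delta_ge (d : ℕ) : d + 1 ≤ Delta d := by unfold Delta; split <;> omega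
lemma Delta_le (d : ℕ) : Delta d ≤ d + 2 := by unfold Delta; split <;> omega
lemma verts_ncard_le {n d : ℕ} {G : SimpleGraph (Fin n)} (hreg : IsRegularGraph G d)
    {H : G.Subgraph} (hΔ : (edgeBoundary G H).ncard = Delta d) :
    H.verts.ncard ≤ n - 2 := by
  classical
  have hn : H.verts.ncard ≤ n := by
    have := Set.ncard_le_ncard (Set.subset_univ H.verts) (Set.toFinite _)
    rwa [Set.ncard_univ, Nat.card_eq_fintype_card, Fintype.card_fin] at this
  by_contra hcon
  push_neg at hcon
  -- so ncard = n - 1 or n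
  rcases Nat.lt_or_ge (H.verts.ncard) n with hlt | hge
  · -- ncard = n - 1 : complement is a single vertex
    have h1 : (Set.univ \ H.verts).ncard = 1 := by
      rw [Set.ncard_diff (Set.subset_univ _) (Set.toFinite _), Set.ncard_univ,
        Nat.card_eq_fintype_card, Fintype.card_fin]
      omega
    obtain ⟨w, hw⟩ := Set.ncard_eq_one.mp h1
    have hmem : ∀ v : Fin n, v ∉ H.verts ↔ v = w := by
      intro v
      constructor
      · intro hv
        have : v ∈ Set.univ \ H.verts := ⟨trivial, hv⟩
        rwa [hw, Set.mem_singleton_iff] at this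
      · intro hv
        have hw' : w ∈ Set.univ \ H.verts := by
          rw [hw]; exact Set.mem_singleton w
        exact hv ▸ hw'.2
    have hb : edgeBoundary G H = (fun u => s(u, w)) '' (G.neighborSet w) := by
      ext e
      constructor
      · rintro ⟨u, v, rfl, hadj, hu, hv⟩
        rw [hmem] at hv
        subst hv
        exact ⟨u, hadj.symm, rfl⟩
      · rintro ⟨u, hu, rfl⟩
        rw [SimpleGraph.mem_neighborSet] at hu
        refine ⟨u, w, rfl, hu.symm, ?_, (hmem w).mpr rfl⟩
        by_contra huv
        exact (G.ne_of_adj hu) ((hmem u).mp huv).symm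
    have : (edgeBoundary G H).ncard = d := by
      rw [hb, Set.ncard_image_of_injOn, hreg w]
      intro a ha b hb heq
      rw [SimpleGraph.mem_neighborSet] at ha
      rcases Sym2.eq_iff.mp heq with ⟨h, _⟩ | ⟨h1, h2⟩
      · exact h
      · exact absurd h1.symm (G.ne_of_adj ha)
    have hge' := Delta_ge d
    omega
  · -- ncard = n : verts = univ, boundary empty
    have hverts : H.verts = Set.univ := by
      apply Set.eq_of_subset_of_ncard_le (Set.subset_univ _)
      rw [Set.ncard_univ, Nat.card_eq_fintype_card, Fintype.card_fin]
      exact hge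
    have : edgeBoundary G H = ∅ := by
      ext e
      simp only [edgeBoundary, Set.mem_setOf_eq, Set.mem_empty_iff_false, iff_false]
      rintro ⟨u, v, _, _, _, hv⟩
      exact hv (hverts ▸ trivial)
    rw [this, Set.ncard_empty] at hΔ
    have := Delta_ge d
    omega
def delVert {n : ℕ} {G : SimpleGraph (Fin n)} (H : G.Subgraph) (v : Fin n) : G.Subgraph where
  verts := H.verts \ {v}
  Adj a b := H.Adj a b ∧ a ≠ v ∧ b ≠ v
  adj_sub h := H.adj_sub h.1
  edge_vert h := ⟨H.edge_vert h.1, h.2.1⟩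
  symm := ⟨fun a b h => ⟨h.1.symm, h.2.2, h.2.1⟩⟩

theorem closed_subgraph_min_degree {n d : ℕ} (hd : 3 ≤ d) (G : SimpleGraph (Fin n))
    (hreg : IsRegularGraph G d) (hls : LocallySparse G d)
    (H : G.Subgraph) (hH : IsClosedSubgraph G d H) (h3 : 3 ≤ H.verts.ncard) :
    ∀ v ∈ H.verts, d ≤ 2 * (H.neighborSet v).ncard := by
  classical
  obtain ⟨hind, hΔ⟩ := hH
  intro v hv
  have hkd : ∀ u : Fin n, (H.neighborSet u).ncard ≤ d := by
    intro u
    have hsub : H.neighborSet u ⊆ G.neighborSet u := fun w hw => H.adj_sub hw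
    have := Set.ncard_le_ncard hsub (Set.toFinite _)
    rwa [hreg u] at this
  have hsum := edgeBoundary_ncard_eq_sum hreg hind
  rw [hΔ] at hsum
  have hub := verts_ncard_le hreg hΔ
  rcases eq_or_lt_of_le h3 with h3' | h4
  · -- |H.verts| = 3
    by_contra hcon
    push_neg at hcon
    have hk2 : ∀ u ∈ H.verts, (H.neighborSet u).ncard ≤ 2 := by
      intro u hu
      have hsub : H.neighborSet u ⊆ H.verts \ {u} := by
        intro w hw
        exact ⟨hw.snd_mem, fun h => (H.adj_sub hw).ne' (h ▸ rfl)⟩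
      have h1 := Set.ncard_le_ncard hsub (Set.toFinite _)
      rwa [Set.ncard_diff_singleton_of_mem hu, ← h3'] at h1
    have hvfin : v ∈ H.verts.toFinset := Set.mem_toFinset.mpr hv
    have hcard : H.verts.toFinset.card = 3 := by
      rw [← Set.ncard_eq_toFinset_card', ← h3']
    have hsplit : (d - (H.neighborSet v).ncard) + ∑ u ∈ H.verts.toFinset.erase v,
        (d - (H.neighborSet u).ncard) = ∑ u ∈ H.verts.toFinset, (d - (H.neighborSet u).ncard) :=
      Finset.add_sum_erase _ (fun u => d - (H.neighborSet u).ncard) hvfin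
    -- terms over the two other vertices
    have hec : (H.verts.toFinset.erase v).card = 2 := by
      rw [Finset.card_erase_of_mem hvfin, hcard]
    have hlow : ∀ u ∈ H.verts.toFinset.erase v, d - 2 ≤ d - (H.neighborSet u).ncard := by
      intro u hu
      have := hk2 u (Set.mem_toFinset.mp (Finset.mem_of_mem_erase hu))
      omega
    have hB : 2 * (d - 2) ≤ ∑ u ∈ H.verts.toFinset.erase v,
        (d - (H.neighborSet u).ncard) := by
      calc 2 * (d - 2) = ∑ _u ∈ H.verts.toFinset.erase v, (d - 2) := by
            rw [Finset.sum_const, hec, smul_eq_mul]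
        _ ≤ _ := Finset.sum_le_sum hlow
    have hDle := Delta_le d
    have hDge := Delta_ge d
    -- conclude d = 3, k_v = 1, and both other degrees are 2
    have hd3 : d = 3 := by omega
    have hD4 : Delta d = 4 := by
      unfold Delta
      rw [if_pos (by rw [hd3]; decide)]
      omega
    have hkv1 : (H.neighborSet v).ncard = 1 := by omega
    have hBval : ∑ u ∈ H.verts.toFinset.erase v, (d - (H.neighborSet u).ncard) = 2 := by
      omega
    have hall : ∀ u ∈ H.verts.toFinset.erase v, (H.neighborSet u).ncard = 2 := by
      intro u hu
      have hsplit2 : (d - (H.neighborSet u).ncard) + ∑ w ∈ (H.verts.toFinset.erase v).erase u,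
          (d - (H.neighborSet w).ncard) = ∑ w ∈ H.verts.toFinset.erase v,
          (d - (H.neighborSet w).ncard) :=
        Finset.add_sum_erase _ (fun u => d - (H.neighborSet u).ncard) hu
      have hec2 : ((H.verts.toFinset.erase v).erase u).card = 1 := by
        rw [Finset.card_erase_of_mem hu, hec]
      have hrest : 1 ≤ ∑ w ∈ (H.verts.toFinset.erase v).erase u,
          (d - (H.neighborSet w).ncard) := by
        calc 1 = ∑ _w ∈ (H.verts.toFinset.erase v).erase u, 1 := by
              rw [Finset.sum_const, hec2, smul_eq_mul]
          _ ≤ _ := Finset.sum_le_sum (by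
              intro w hw
              have := hk2 w (Set.mem_toFinset.mp
                (Finset.mem_of_mem_erase (Finset.mem_of_mem_erase hw)))
              omega)
      have := hk2 u (Set.mem_toFinset.mp (Finset.mem_of_mem_erase hu))
      omega
    -- every other vertex is adjacent to everything else, in particular to v
    have hadjv : ∀ u ∈ H.verts.toFinset.erase v, u ∈ H.neighborSet v := by
      intro u hu
      have hu' : u ∈ H.verts := Set.mem_toFinset.mp (Finset.mem_of_mem_erase hu)
      have hne : u ≠ v := (Finset.mem_erase.mp hu).1
      have hsub : H.neighborSet u ⊆ H.verts \ {u} := by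
        intro w hw
        exact ⟨hw.snd_mem, fun h => (H.adj_sub hw).ne' (h ▸ rfl)⟩
      have hcard2 : (H.verts \ {u}).ncard = 2 := by
        rw [Set.ncard_diff_singleton_of_mem hu', ← h3']
      have heq : H.neighborSet u = H.verts \ {u} := by
        apply Set.eq_of_subset_of_ncard_le hsub _ (Set.toFinite _)
        rw [hcard2, hall u hu]
      have hvmem : v ∈ H.neighborSet u := by
        rw [heq]
        exact ⟨hv, fun h => hne (Set.mem_singleton_iff.mp h).symm⟩
      exact hvmem.symm
    -- hence v has at least 2 neighbors, contradiction with hkv1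
    have hsub2 : (H.verts.toFinset.erase v : Set (Fin n)) ⊆ H.neighborSet v := by
      intro u hu
      exact hadjv u hu
    have := Set.ncard_le_ncard hsub2 (Set.toFinite _)
    rw [Set.ncard_coe_finset, hec, hkv1] at this
    omega
  · -- |H.verts| ≥ 4
    set H' := delVert H v with hH'
    have hind' : H'.IsInduced := by
      intro a ha b hb hab
      exact ⟨hind ha.1 hb.1 hab, ha.2, hb.2⟩
    have hvc : H'.verts.ncard = H.verts.ncard - 1 :=
      Set.ncard_diff_singleton_of_mem hv
    have hsp : d + 1 ≤ (edgeBoundary G H').ncard := by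
      apply hls H' <;> omega
    have hsum' := edgeBoundary_ncard_eq_sum hreg hind'
    have hvfin : v ∈ H.verts.toFinset := Set.mem_toFinset.mpr hv
    have hft : H'.verts.toFinset = H.verts.toFinset.erase v := by
      ext u
      simp [hH', delVert, Finset.mem_erase, Set.mem_toFinset, and_comm]
    have hnbr : ∀ u ∈ H.verts.toFinset.erase v,
        (H'.neighborSet u).ncard = (H.neighborSet u).ncard -
          (if H.Adj u v then 1 else 0) := by
      intro u hu
      have hne : u ≠ v := (Finset.mem_erase.mp hu).1
      have hset : H'.neighborSet u = H.neighborSet u \ {v} := by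
        ext w
        simp only [SimpleGraph.Subgraph.mem_neighborSet, hH', delVert, Set.mem_diff,
          Set.mem_singleton_iff]
        constructor
        · rintro ⟨h1, _, h2⟩; exact ⟨h1, h2⟩
        · rintro ⟨h1, h2⟩; exact ⟨h1, hne, h2⟩
      rw [hset]
      by_cases hadj : H.Adj u v
      · rw [if_pos hadj,
          Set.ncard_diff_singleton_of_mem (show v ∈ H.neighborSet u from hadj)]
      · rw [if_neg hadj, Set.diff_singleton_eq_self (show v ∉ H.neighborSet u from hadj)]
        omega
    have hterm : ∀ u ∈ H.verts.toFinset.erase v,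
        d - (H'.neighborSet u).ncard
          = (d - (H.neighborSet u).ncard) + (if H.Adj u v then 1 else 0) := by
      intro u hu
      have h1 := hnbr u hu
      have h2 := hkd u
      by_cases hadj : H.Adj u v
      · have hpos : 1 ≤ (H.neighborSet u).ncard := by
          have : (H.neighborSet u).Nonempty := ⟨v, hadj⟩
          have := Set.ncard_pos (Set.toFinite _) |>.mpr this
          omega
        rw [if_pos hadj] at h1 ⊢
        omega
      · rw [if_neg hadj] at h1 ⊢
        omega
    have hfilter : (H.verts.toFinset.erase v).filter (fun u => H.Adj u v)
        = (H.neighborSet v).toFinset := by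
      ext u
      simp only [Finset.mem_filter, Finset.mem_erase, Set.mem_toFinset,
        SimpleGraph.Subgraph.mem_neighborSet]
      constructor
      · rintro ⟨⟨_, _⟩, h⟩; exact h.symm
      · intro h
        exact ⟨⟨(H.adj_sub h).ne', h.snd_mem⟩, h.symm⟩
    have hsum'' : (edgeBoundary G H').ncard
        = (∑ u ∈ H.verts.toFinset.erase v, (d - (H.neighborSet u).ncard))
          + (H.neighborSet v).ncard := by
      rw [hsum', hft, Finset.sum_congr rfl hterm, Finset.sum_add_distrib,
        ← Finset.card_filter, hfilter, ← Set.ncard_eq_toFinset_card']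
    have hsplit : (d - (H.neighborSet v).ncard) + ∑ u ∈ H.verts.toFinset.erase v,
        (d - (H.neighborSet u).ncard) = ∑ u ∈ H.verts.toFinset, (d - (H.neighborSet u).ncard) :=
      Finset.add_sum_erase _ (fun u => d - (H.neighborSet u).ncard) hvfin
    have hkdv := hkd v
    rcases Nat.even_or_odd d with ⟨m, hm⟩ | hodd
    · have hDval : Delta d = d + 2 := by
        simp [Delta, Nat.odd_iff, hm]; omega
      omega
    · have hDval : Delta d = d + 1 := by simp [Delta, hodd]
      omega
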